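/- Let F : ℝ × ℝ → ℝ be continuous with support contained in [x₀−r, x₀+r] × [0,h] where r, h > 0 and y₀ > 0. Define G(v) = |∫_{ℝ} F(x₀ + v + u, y₀ + v² − u²) du|. Then lim_{v→∞} v · G(v) ≤ (1/2) · (sup |F|) · h. -/

import Mathlib

open MeasureTheory Filter Real Set

theorem stmt3 (F : ℝ × ℝ → ℝ) (hF : Continuous F) (x₀ y₀ r h : ℝ)
    (hr : 0 < r) (hh : 0 < h) (hy₀ : 0 < y₀)
    (hsupp : Function.support F ⊆ Set.Icc (x₀ - r) (x₀ + r) ×ˢ Set.Icc 0 h) :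
    Filter.limsup (fun v : ℝ => v * |∫ u : ℝ, F (x₀ + v + u, y₀ + v ^ 2 - u ^ 2)|)
        Filter.atTop ≤ (1 / 2) * (⨆ p, |F p|) * h := by
  set M := ⨆ p, |F p| with hMdef
  have hK : IsCompact (Set.Icc (x₀ - r) (x₀ + r) ×ˢ Set.Icc 0 h) :=
    isCompact_Icc.prod isCompact_Icc
  have hcs : HasCompactSupport F :=
    HasCompactSupport.intro hK (fun x hx => by
      by_contra h0
      exact hx (hsupp h0))
  have hbdd : BddAbove (Set.range fun p => |F p|) := by
    simpa [Real.norm_eq_abs] using (hF.norm.bddAbove_range_of_hasCompactSupport hcs.norm)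
  have hM0 : 0 ≤ M := le_trans (abs_nonneg _) (le_ciSup hbdd ((x₀, y₀) : ℝ × ℝ))
  set c := y₀ - h with hc
  -- the limit lemma
  have hT : Tendsto (fun v : ℝ => v / Real.sqrt (v ^ 2 + c)) atTop (nhds 1) := by
    have h1 : Tendsto (fun v : ℝ => c / v ^ 2) atTop (nhds 0) :=
      Filter.Tendsto.div_atTop tendsto_const_nhds
        (tendsto_pow_atTop (by norm_num))
    have h2 : Tendsto (fun v : ℝ => 1 / Real.sqrt (1 + c / v ^ 2)) atTop (nhds 1) := by
      have h3 : Tendsto (fun v : ℝ => Real.sqrt (1 + c / v ^ 2)) atTop (nhds 1) := by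
        have := (tendsto_const_nhds.add h1).sqrt (f := fun v : ℝ => 1 + c / v ^ 2)
        simpa using this
      have := h3.inv₀ (by norm_num)
      simpa using this
    refine h2.congr' ?_
    filter_upwards [eventually_ge_atTop (max 1 (|c| + 1))] with v hv
    have hv1 : (1 : ℝ) ≤ v := le_trans (le_max_left _ _) hv
    have hv0 : (0 : ℝ) < v := lt_of_lt_of_le one_pos hv1
    have hvc : |c| < v ^ 2 := by nlinarith [le_trans (le_max_right _ _) hv]
    have hv2 : (0:ℝ) < v ^ 2 := by positivity
    have hpos : (0 : ℝ) < 1 + c / v ^ 2 := by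
      obtain ⟨h5, h6⟩ := abs_lt.mp hvc
      have h7 : -1 < c / v ^ 2 := by
        rw [neg_lt, ← neg_div, div_lt_one hv2]; linarith
      linarith
    have hsq : Real.sqrt (v ^ 2 + c) = v * Real.sqrt (1 + c / v ^ 2) := by
      rw [show v ^ 2 + c = v ^ 2 * (1 + c / v ^ 2) by field_simp,
        Real.sqrt_mul (sq_nonneg v), Real.sqrt_sq hv0.le]
    rw [hsq, div_mul_cancel_left₀ hv0.ne', one_div]
  -- eventual bound
  have key : ∀ᶠ v in atTop,
      v * |∫ u : ℝ, F (x₀ + v + u, y₀ + v ^ 2 - u ^ 2)| ≤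
        M * h / 2 * (v / Real.sqrt (v ^ 2 + c)) := by
    filter_upwards [eventually_ge_atTop (max (r + 1) (h + 1))] with v hv
    have hvr : r + 1 ≤ v := le_trans (le_max_left _ _) hv
    have hvh : h + 1 ≤ v := le_trans (le_max_right _ _) hv
    have hv1 : (1 : ℝ) ≤ v := by linarith
    have hv0 : (0 : ℝ) < v := by linarith
    have hB : (0 : ℝ) < v ^ 2 + c := by nlinarith
    have hA : (0 : ℝ) < y₀ + v ^ 2 := by nlinarith
    set A := y₀ + v ^ 2 with hAdef
    set B := v ^ 2 + c with hBdef
    have hBA : B ≤ A := by rw [hAdef, hBdef, hc]; linarith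
    set a := -Real.sqrt A with hadef
    set b := -Real.sqrt B with hbdef
    have hab : a ≤ b := by
      rw [hadef, hbdef, neg_le_neg_iff]
      exact Real.sqrt_le_sqrt hBA
    have hzero : ∀ u : ℝ, u ∉ Set.Icc a b → F (x₀ + v + u, y₀ + v ^ 2 - u ^ 2) = 0 := by
      intro u hu
      by_contra h0
      have hmem := hsupp h0
      obtain ⟨⟨hx1, hx2⟩, hy1, hy2⟩ := hmem
      have hx2' : x₀ + v + u ≤ x₀ + r := hx2
      have hy1' : (0:ℝ) ≤ y₀ + v ^ 2 - u ^ 2 := hy1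
      have hy2' : y₀ + v ^ 2 - u ^ 2 ≤ h := hy2
      have hu0 : u ≤ r - v := by linarith [hx2']
      have huA : u ^ 2 ≤ A := by rw [hAdef]; linarith [hy1']
      have huB : B ≤ u ^ 2 := by rw [hBdef, hc]; linarith [hy2']
      have habs1 : Real.sqrt B ≤ -u := by
        have := Real.sqrt_le_sqrt huB
        rwa [Real.sqrt_sq_eq_abs, abs_of_nonpos (by linarith : u ≤ 0)] at this
      have habs2 : -u ≤ Real.sqrt A := by
        have := Real.sqrt_le_sqrt huA
        rwa [Real.sqrt_sq_eq_abs, abs_of_nonpos (by linarith : u ≤ 0)] at this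
      exact hu ⟨by rw [hadef]; linarith, by rw [hbdef]; linarith⟩
    have hint : ∫ u : ℝ, F (x₀ + v + u, y₀ + v ^ 2 - u ^ 2) =
        ∫ u in Set.Icc a b, F (x₀ + v + u, y₀ + v ^ 2 - u ^ 2) :=
      (setIntegral_eq_integral_of_forall_compl_eq_zero hzero).symm
    have hbound : |∫ u in Set.Icc a b, F (x₀ + v + u, y₀ + v ^ 2 - u ^ 2)| ≤
        M * (b - a) := by
      have := norm_setIntegral_le_of_norm_le_const (μ := volume)
        (s := Set.Icc a b) (C := M)
        (by rw [Real.volume_Icc]; exact ENNReal.ofReal_lt_top)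
        (fun u _ => by
          rw [Real.norm_eq_abs]
          exact le_ciSup hbdd (x₀ + v + u, y₀ + v ^ 2 - u ^ 2))
      rwa [Real.norm_eq_abs, measureReal_def, Real.volume_Icc, ENNReal.toReal_ofReal (by linarith)] at this
    have hba : b - a = Real.sqrt A - Real.sqrt B := by rw [hadef, hbdef]; ring
    have hsB : (0 : ℝ) < Real.sqrt B := Real.sqrt_pos.mpr hB
    have hdiff : Real.sqrt A - Real.sqrt B ≤ h / (2 * Real.sqrt B) := by
      rw [le_div_iff₀ (by linarith)]
      nlinarith [Real.sq_sqrt hA.le, Real.sq_sqrt hB.le, Real.sqrt_nonneg A,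
        Real.sqrt_le_sqrt hBA]
    calc v * |∫ u : ℝ, F (x₀ + v + u, y₀ + v ^ 2 - u ^ 2)|
        ≤ v * (M * (h / (2 * Real.sqrt B))) := by
          have h1 : |∫ u : ℝ, F (x₀ + v + u, y₀ + v ^ 2 - u ^ 2)| ≤
              M * (h / (2 * Real.sqrt B)) := by
            rw [hint]
            refine hbound.trans ?_
            have : b - a ≤ h / (2 * Real.sqrt B) := by rw [hba]; exact hdiff
            nlinarith
          nlinarith [abs_nonneg (∫ u : ℝ, F (x₀ + v + u, y₀ + v ^ 2 - u ^ 2))]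
      _ = M * h / 2 * (v / Real.sqrt B) := by field_simp
  -- conclude
  have hlim : Tendsto (fun v : ℝ => M * h / 2 * (v / Real.sqrt (v ^ 2 + c))) atTop
      (nhds (M * h / 2 * 1)) := tendsto_const_nhds.mul hT
  have hcob : IsCoboundedUnder (· ≤ ·) atTop
      (fun v : ℝ => v * |∫ u : ℝ, F (x₀ + v + u, y₀ + v ^ 2 - u ^ 2)|) := by
    refine isCoboundedUnder_le_of_eventually_le atTop (x := 0) ?_
    filter_upwards [eventually_ge_atTop (0 : ℝ)] with v hv
    positivity
  refine le_trans (Filter.limsup_le_limsup key hcob hlim.isBoundedUnder_le) ?_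
  rw [hlim.limsup_eq]
  exact le_of_eq (by ring)
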